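/- For every even-cyclic L^∘-grammar Gr, the following inclusions hold: L(Gr^u) ⊆ L(Gr) ⊆ L((Gr^u)^{CS}), where Gr^u is the L^∘-grammar obtained from Gr by deleting all occurrences of the connective ^∘ from the distinguished type and from all types in the dictionary, and (Gr^u)^{CS} is the same grammar as Gr^u but considered as an (L+(CS))-grammar. -/
import Mathlib


/-- Types of the Lambek calculus with the cyclic shift `L^∘`, built from
primitive types `P` by `\` (`ldiv A B = A \ B`), `/` (`rdiv B A = B / A`),
`·` (`mul`) and the cyclic shift `^∘` (`circ`). -/
inductive Fm (P : Type) : Type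
  | prim : P → Fm P
  | ldiv : Fm P → Fm P → Fm P
  | rdiv : Fm P → Fm P → Fm P
  | mul  : Fm P → Fm P → Fm P
  | circ : Fm P → Fm P
deriving DecidableEq

open Fm

/-- Derivability of sequents in the Lambek calculus with the cyclic shift `L^∘`.
The Boolean flag indicates whether the rule (cut) may be used:
`Dv P true` is `L^∘` (with cut), `Dv P false` is its cut-free part. -/
inductive Dv (P : Type) : Bool → List (Fm P) → Fm P → Prop
  | ax (c : Bool) (A : Fm P) :
      Dv P c [A] A
  | ldivL (c : Bool) (Γ Δ Pi : List (Fm P)) (A B C : Fm P) :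
      Dv P c (Γ ++ B :: Δ) C → Dv P c Pi A → Pi ≠ [] →
      Dv P c (Γ ++ Pi ++ ldiv A B :: Δ) C
  | ldivR (c : Bool) (Pi : List (Fm P)) (A B : Fm P) :
      Dv P c (A :: Pi) B → Pi ≠ [] →
      Dv P c Pi (ldiv A B)
  | rdivL (c : Bool) (Γ Δ Pi : List (Fm P)) (A B C : Fm P) :
      Dv P c (Γ ++ B :: Δ) C → Dv P c Pi A → Pi ≠ [] →
      Dv P c (Γ ++ rdiv B A :: (Pi ++ Δ)) C
  | rdivR (c : Bool) (Pi : List (Fm P)) (A B : Fm P) :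
      Dv P c (Pi ++ [A]) B → Pi ≠ [] →
      Dv P c Pi (rdiv B A)
  | mulL (c : Bool) (Γ Δ : List (Fm P)) (A B C : Fm P) :
      Dv P c (Γ ++ A :: B :: Δ) C →
      Dv P c (Γ ++ mul A B :: Δ) C
  | mulR (c : Bool) (Pi Psi : List (Fm P)) (A B : Fm P) :
      Dv P c Pi A → Dv P c Psi B → Pi ≠ [] → Psi ≠ [] →
      Dv P c (Pi ++ Psi) (mul A B)
  | circR (c : Bool) (Pi : List (Fm P)) (A : Fm P) :
      Dv P c Pi A →
      Dv P c Pi (circ A)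
  | circL (c : Bool) (A B : Fm P) :
      Dv P c [B] (circ A) →
      Dv P c [circ B] (circ A)
  | circC (c : Bool) (Pi Psi : List (Fm P)) (A : Fm P) :
      Dv P c (Pi ++ Psi) (circ A) → Pi ≠ [] → Psi ≠ [] →
      Dv P c (Psi ++ Pi) (circ A)
  | cut (Γ Δ Pi : List (Fm P)) (A B : Fm P) :
      Dv P true Pi A → Dv P true (Γ ++ A :: Δ) B → Pi ≠ [] →
      Dv P true (Γ ++ Pi ++ Δ) B

/-- `cyclicOK true A` says that `A` is even-cyclic (no odd subtype occurrence
of the form `B^∘`); `cyclicOK false A` says that `A` is odd-cyclic (no even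
subtype occurrence of the form `B^∘`).  Recall `ldiv A B = A \ B` and
`rdiv B A = B / A`, so the first argument of `ldiv` and the second argument of
`rdiv` are the denominators, where parity flips. -/
def cyclicOK {P : Type} : Bool → Fm P → Prop
  | _, Fm.prim _ => True
  | b, Fm.ldiv A B => cyclicOK (!b) A ∧ cyclicOK b B
  | b, Fm.rdiv B A => cyclicOK b B ∧ cyclicOK (!b) A
  | b, Fm.mul A B => cyclicOK b A ∧ cyclicOK b B
  | b, Fm.circ A => b = true ∧ cyclicOK b A

/-- The language recognized by a categorial grammar based on a calculus with
derivability relation `K`: the grammar has distinguished type `S` and finite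
dictionary `R` (a list of pairs `(a, T)` meaning `a ▷ T`); a nonempty word
`a1…an` is recognized iff there are types `T1,…,Tn` with `ai ▷ Ti` and
`K ⊢ T1,…,Tn → S`. -/
def GLang {α Ty : Type} (K : List Ty → Ty → Prop) (S : Ty) (R : List (α × Ty)) :
    Set (List α) :=
  { w | w ≠ [] ∧ ∃ Ts : List Ty, List.Forall₂ (fun a T => (a, T) ∈ R) w Ts ∧ K Ts S }

/-- The permutation closure `perm(L)` of a language `L`: all words obtained by
permuting the letters of a word of `L`. -/
def permClosure {α : Type} (L : Set (List α)) : Set (List α) :=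
  { w | ∃ v ∈ L, w.Perm v }

/-- Derivability in the calculus `L+(CS)` (the Lambek calculus with cut plus
the structural rule (CS)), here formulated over the same set of types; note
that it has no rules for `^∘`, and it is applied below only to `^∘`-free
types. -/
inductive DvCS (P : Type) : List (Fm P) → Fm P → Prop
  | ax (A : Fm P) :
      DvCS P [A] A
  | ldivL (Γ Δ Pi : List (Fm P)) (A B C : Fm P) :
      DvCS P (Γ ++ B :: Δ) C → DvCS P Pi A → Pi ≠ [] →
      DvCS P (Γ ++ Pi ++ Fm.ldiv A B :: Δ) C
  | ldivR (Pi : List (Fm P)) (A B : Fm P) :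
      DvCS P (A :: Pi) B → Pi ≠ [] →
      DvCS P Pi (Fm.ldiv A B)
  | rdivL (Γ Δ Pi : List (Fm P)) (A B C : Fm P) :
      DvCS P (Γ ++ B :: Δ) C → DvCS P Pi A → Pi ≠ [] →
      DvCS P (Γ ++ Fm.rdiv B A :: (Pi ++ Δ)) C
  | rdivR (Pi : List (Fm P)) (A B : Fm P) :
      DvCS P (Pi ++ [A]) B → Pi ≠ [] →
      DvCS P Pi (Fm.rdiv B A)
  | mulL (Γ Δ : List (Fm P)) (A B C : Fm P) :
      DvCS P (Γ ++ A :: B :: Δ) C →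
      DvCS P (Γ ++ Fm.mul A B :: Δ) C
  | mulR (Pi Psi : List (Fm P)) (A B : Fm P) :
      DvCS P Pi A → DvCS P Psi B → Pi ≠ [] → Psi ≠ [] →
      DvCS P (Pi ++ Psi) (Fm.mul A B)
  | cs (Pi Psi : List (Fm P)) (A : Fm P) :
      DvCS P (Pi ++ Psi) A → Pi ≠ [] → Psi ≠ [] →
      DvCS P (Psi ++ Pi) A
  | cut (Γ Δ Pi : List (Fm P)) (A B : Fm P) :
      DvCS P Pi A → DvCS P (Γ ++ A :: Δ) B → Pi ≠ [] →
      DvCS P (Γ ++ Pi ++ Δ) B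

/-- `unneck A` (`A^u`) deletes all occurrences of the connective `^∘` from `A`. -/
def unneck {P : Type} : Fm P → Fm P
  | Fm.prim p => Fm.prim p
  | Fm.ldiv A B => Fm.ldiv (unneck A) (unneck B)
  | Fm.rdiv A B => Fm.rdiv (unneck A) (unneck B)
  | Fm.mul A B => Fm.mul (unneck A) (unneck B)
  | Fm.circ A => unneck A

lemma unneck_dv {P : Type} : ∀ A : Fm P,
    (cyclicOK false A → Dv P true [A] (unneck A)) ∧
    (cyclicOK true A → Dv P true [unneck A] A) := by
  intro A
  induction A with
  | prim p => exact ⟨fun _ => Dv.ax _ _, fun _ => Dv.ax _ _⟩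
  | ldiv B C ihB ihC =>
    constructor
    · rintro ⟨hB, hC⟩
      apply Dv.ldivR _ _ _ _ ?_ (by simp)
      have h1 : Dv P true ([] ++ [unneck B] ++ Fm.ldiv B C :: []) (unneck C) :=
        Dv.ldivL true [] [] [unneck B] B C (unneck C) (ihC.1 hC) (ihB.2 hB) (by simp)
      simpa [unneck] using h1
    · rintro ⟨hB, hC⟩
      apply Dv.ldivR _ _ _ _ ?_ (by simp)
      have h1 : Dv P true ([] ++ [B] ++ Fm.ldiv (unneck B) (unneck C) :: []) C :=
        Dv.ldivL true [] [] [B] (unneck B) (unneck C) C (ihC.2 hC) (ihB.1 hB) (by simp)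
      simpa [unneck] using h1
  | rdiv B C ihB ihC =>
    constructor
    · rintro ⟨hB, hC⟩
      apply Dv.rdivR _ _ _ _ ?_ (by simp)
      have h1 : Dv P true ([] ++ Fm.rdiv B C :: ([unneck C] ++ [])) (unneck B) :=
        Dv.rdivL true [] [] [unneck C] C B (unneck B) (ihB.1 hB) (ihC.2 hC) (by simp)
      simpa [unneck] using h1
    · rintro ⟨hB, hC⟩
      apply Dv.rdivR _ _ _ _ ?_ (by simp)
      have h1 : Dv P true ([] ++ Fm.rdiv (unneck B) (unneck C) :: ([C] ++ [])) B :=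
        Dv.rdivL true [] [] [C] (unneck C) (unneck B) B (ihB.2 hB) (ihC.1 hC) (by simp)
      simpa [unneck] using h1
  | mul B C ihB ihC =>
    constructor
    · rintro ⟨hB, hC⟩
      have h1 : Dv P true ([] ++ Fm.mul B C :: []) (Fm.mul (unneck B) (unneck C)) := by
        apply Dv.mulL
        exact Dv.mulR true [B] [C] _ _ (ihB.1 hB) (ihC.1 hC) (by simp) (by simp)
      simpa [unneck] using h1
    · rintro ⟨hB, hC⟩
      have h1 : Dv P true ([] ++ Fm.mul (unneck B) (unneck C) :: []) (Fm.mul B C) := by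
        apply Dv.mulL
        exact Dv.mulR true [unneck B] [unneck C] _ _ (ihB.2 hB) (ihC.2 hC) (by simp) (by simp)
      simpa [unneck] using h1
  | circ B ihB =>
    constructor
    · rintro ⟨h, -⟩; exact absurd h (by simp)
    · rintro ⟨-, hB⟩
      exact Dv.circR true [unneck B] B (ihB.2 hB)

lemma cut_list {P : Type} (A : Fm P) {Us Vs : List (Fm P)}
    (h : List.Forall₂ (fun U V => Dv P true [V] U) Us Vs) :
    ∀ Γ : List (Fm P), Dv P true (Γ ++ Us) A → Dv P true (Γ ++ Vs) A := by
  induction h with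
  | nil => intro Γ h; simpa using h
  | @cons a b l₁ l₂ hab htail ih =>
    intro Γ hD
    have h1 : Dv P true (Γ ++ [b] ++ l₁) A :=
      Dv.cut Γ l₁ [b] a A hab hD (by simp)
    have h2 := ih (Γ ++ [b]) (by simpa using h1)
    simpa using h2

lemma dv_to_dvcs {P : Type} {c : Bool} {Pi0 : List (Fm P)} {A : Fm P}
    (h : Dv P c Pi0 A) : DvCS P (Pi0.map unneck) (unneck A) := by
  induction h with
  | ax c A => exact DvCS.ax _
  | ldivL c Γ Δ Pi A B C h1 h2 hne ih1 ih2 =>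
    have := DvCS.ldivL (Γ.map unneck) (Δ.map unneck) (Pi.map unneck)
      (unneck A) (unneck B) (unneck C) (by simpa using ih1) ih2 (by simpa using hne)
    simpa [unneck] using this
  | ldivR c Pi A B h1 hne ih =>
    have := DvCS.ldivR (Pi.map unneck) (unneck A) (unneck B)
      (by simpa using ih) (by simpa using hne)
    simpa [unneck] using this
  | rdivL c Γ Δ Pi A B C h1 h2 hne ih1 ih2 =>
    have := DvCS.rdivL (Γ.map unneck) (Δ.map unneck) (Pi.map unneck)
      (unneck A) (unneck B) (unneck C) (by simpa using ih1) ih2 (by simpa using hne)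
    simpa [unneck] using this
  | rdivR c Pi A B h1 hne ih =>
    have := DvCS.rdivR (Pi.map unneck) (unneck A) (unneck B)
      (by simpa using ih) (by simpa using hne)
    simpa [unneck] using this
  | mulL c Γ Δ A B C h1 ih =>
    have := DvCS.mulL (Γ.map unneck) (Δ.map unneck)
      (unneck A) (unneck B) (unneck C) (by simpa using ih)
    simpa [unneck] using this
  | mulR c Pi Psi A B h1 h2 hne1 hne2 ih1 ih2 =>
    have := DvCS.mulR (Pi.map unneck) (Psi.map unneck) (unneck A) (unneck B)
      ih1 ih2 (by simpa using hne1) (by simpa using hne2)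
    simpa [unneck] using this
  | circR c Pi A h1 ih => simpa [unneck] using ih
  | circL c A B h1 ih => simpa [unneck] using ih
  | circC c Pi Psi A h1 hne1 hne2 ih =>
    have := DvCS.cs (Pi.map unneck) (Psi.map unneck) (unneck (Fm.circ A))
      (by simpa using ih) (by simpa using hne1) (by simpa using hne2)
    simpa using this
  | cut Γ Δ Pi A B h1 h2 hne ih1 ih2 =>
    have := DvCS.cut (Γ.map unneck) (Δ.map unneck) (Pi.map unneck)
      (unneck A) (unneck B) ih1 (by simpa using ih2) (by simpa using hne)
    simpa using this

lemma forall₂_unneck : ∀ Ts : List (Fm ℕ), (∀ T ∈ Ts, cyclicOK false T) →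
    List.Forall₂ (fun U V => Dv ℕ true [V] U) (Ts.map unneck) Ts := by
  intro Ts
  induction Ts with
  | nil => intro _; exact List.Forall₂.nil
  | cons T Ts ih =>
    intro hcyc
    exact List.Forall₂.cons ((unneck_dv T).1 (hcyc T (by simp)))
      (ih fun T h => hcyc T (by simp [h]))

lemma extract_orig {α : Type} {rel : List (α × Fm ℕ)}
    (hrel : ∀ p ∈ rel, cyclicOK false p.2) :
    ∀ {w : List α} {Ts' : List (Fm ℕ)},
      List.Forall₂ (fun a T => (a, T) ∈ rel.map fun p => (p.1, unneck p.2)) w Ts' →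
      ∃ Ts : List (Fm ℕ), List.Forall₂ (fun a T => (a, T) ∈ rel) w Ts ∧
        Ts' = Ts.map unneck ∧ ∀ T ∈ Ts, cyclicOK false T := by
  intro w Ts' h
  induction h with
  | nil => exact ⟨[], List.Forall₂.nil, rfl, by simp⟩
  | @cons a T' w' Ts'' hmem htail ih =>
    obtain ⟨Ts, hF, hEq, hcyc⟩ := ih
    rcases List.mem_map.1 hmem with ⟨p, hp, hpe⟩
    obtain ⟨rfl, rfl⟩ : p.1 = a ∧ unneck p.2 = T' := by
      constructor <;> [exact congrArg Prod.fst hpe; exact congrArg Prod.snd hpe]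
    refine ⟨p.2 :: Ts, List.Forall₂.cons (by simpa using hp) hF, by simp [hEq], ?_⟩
    intro T hT
    rcases List.mem_cons.1 hT with h | h
    · exact h ▸ hrel p hp
    · exact hcyc T h

/-- For every even-cyclic `L^∘`-grammar `Gr` (distinguished type `S`
even-cyclic, all dictionary types odd-cyclic):
`L(Gr^u) ⊆ L(Gr) ⊆ L((Gr^u)^{CS})`, where `Gr^u` is obtained by deleting all
`^∘` connectives and `(Gr^u)^{CS}` is the same grammar regarded as an
`(L+(CS))`-grammar. -/
theorem even_cyclic_grammar_bounds (α : Type) (S : Fm ℕ) (rel : List (α × Fm ℕ))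
    (hS : cyclicOK true S) (hrel : ∀ p ∈ rel, cyclicOK false p.2) :
    GLang (Dv ℕ true) (unneck S) (rel.map fun p => (p.1, unneck p.2)) ⊆
        GLang (Dv ℕ true) S rel ∧
    GLang (Dv ℕ true) S rel ⊆
        GLang (DvCS ℕ) (unneck S) (rel.map fun p => (p.1, unneck p.2)) := by
  constructor
  · rintro w ⟨hne, Ts', hF, hD⟩
    obtain ⟨Ts, hF2, rfl, hcyc⟩ := extract_orig hrel hF
    refine ⟨hne, Ts, hF2, ?_⟩
    have hTsne : Ts ≠ [] := by
      intro h; subst h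
      exact hne (List.length_eq_zero_iff.1 (by simpa using hF2.length_eq))
    -- cut with unneck S → S
    have hDS : Dv ℕ true (Ts.map unneck) S := by
      have hcut := Dv.cut ([] : List (Fm ℕ)) [] (Ts.map unneck) (unneck S) S hD
        (by simpa using (unneck_dv S).2 hS) (by simpa using hTsne)
      simpa using hcut
    -- cut each unneck T back to T
    have hF3 := forall₂_unneck Ts hcyc
    have := cut_list S hF3 [] (by simpa using hDS)
    simpa using this
  · rintro w ⟨hne, Ts, hF, hD⟩
    refine ⟨hne, Ts.map unneck, ?_, dv_to_dvcs hD⟩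
    rw [List.forall₂_map_right_iff]
    refine hF.imp fun {a T} h => ?_
    exact List.mem_map.2 ⟨(a, T), h, rfl⟩
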